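/- For all integers n ≥ 1 and k ≥ 1, the k-order harmonic number satisfies H_n^{(k)} = Σ_{j=1}^{n} C(n+1, j+1) · S(k, j) · j!. -/

import Mathlib

open Finset

/-- The generalized transformation coefficient
`S k j = (1/j!) · Σ_{m=1}^{j} C(j,m) · (−1)^{j−m} · m^{−k}`. -/
noncomputable def S (k j : ℕ) : ℝ :=
  (1 / (Nat.factorial j : ℝ)) *
    ∑ m ∈ Finset.Icc 1 j, (Nat.choose j m : ℝ) * (-1 : ℝ) ^ (j - m) / (m : ℝ) ^ k

/-- The `r`-order harmonic number `H r n = Σ_{m=1}^{n} 1/m^r`. -/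
noncomputable def H (r n : ℕ) : ℝ :=
  ∑ m ∈ Finset.Icc 1 n, 1 / (m : ℝ) ^ r

lemma alt_real {p : ℕ} (hp : p ≠ 0) :
    ∑ i ∈ Finset.range (p + 1), (-1 : ℝ) ^ i * (p.choose i : ℝ) = 0 := by
  have h := Int.alternating_sum_range_choose_of_ne hp
  have h2 : ((∑ i ∈ Finset.range (p + 1), (-1 : ℤ) ^ i * (p.choose i : ℤ) : ℤ) : ℝ) = 0 := by
    rw [h]; simp
  push_cast at h2
  exact h2

lemma lemA {N m : ℕ} (hm : m < N) :
    ∑ j ∈ Finset.Icc m N, (-1 : ℝ) ^ (j - m) * ((N.choose j : ℝ) * (j.choose m : ℝ)) = 0 := by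
  have hcongr : ∀ j ∈ Finset.Icc m N,
      (-1 : ℝ) ^ (j - m) * ((N.choose j : ℝ) * (j.choose m : ℝ)) =
        (N.choose m : ℝ) * ((-1 : ℝ) ^ (j - m) * ((N - m).choose (j - m) : ℝ)) := by
    intro j hj
    rw [Finset.mem_Icc] at hj
    have := Nat.choose_mul (n := N) hj.1
    have hcast : (N.choose j : ℝ) * (j.choose m : ℝ) =
        (N.choose m : ℝ) * ((N - m).choose (j - m) : ℝ) := by
      exact_mod_cast congrArg (Nat.cast (R := ℝ)) this
    rw [hcast]; ring
  rw [Finset.sum_congr rfl hcongr, ← Finset.mul_sum]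
  have hre : ∑ j ∈ Finset.Icc m N, (-1 : ℝ) ^ (j - m) * ((N - m).choose (j - m) : ℝ)
      = ∑ i ∈ Finset.range ((N - m) + 1), (-1 : ℝ) ^ i * ((N - m).choose i : ℝ) := by
    rw [← Finset.Ico_add_one_right_eq_Icc, Finset.sum_Ico_eq_sum_range]
    have : N + 1 - m = (N - m) + 1 := by omega
    rw [this]
    exact Finset.sum_congr rfl fun i _ => by rw [Nat.add_sub_cancel_left]
  rw [hre, alt_real (by omega)]
  ring

lemma lemB : ∀ n m : ℕ, m ≤ n →
    ∑ j ∈ Finset.Icc m n, (-1 : ℝ) ^ (j - m) * (((n + 1).choose (j + 1) : ℝ) * (j.choose m : ℝ))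
      = 1 := by
  intro n
  induction n with
  | zero =>
    intro m hm
    interval_cases m
    simp
  | succ n ih =>
    intro m hm
    rcases Nat.lt_or_ge m (n + 1) with hlt | hge
    · have hmn : m ≤ n := by omega
      have hsplit : ∀ j ∈ Finset.Icc m (n + 1),
          (-1 : ℝ) ^ (j - m) * (((n + 2).choose (j + 1) : ℝ) * (j.choose m : ℝ)) =
            (-1 : ℝ) ^ (j - m) * (((n + 1).choose j : ℝ) * (j.choose m : ℝ)) +
            (-1 : ℝ) ^ (j - m) * (((n + 1).choose (j + 1) : ℝ) * (j.choose m : ℝ)) := by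
        intro j _
        have : (n + 2).choose (j + 1) = (n + 1).choose j + (n + 1).choose (j + 1) :=
          Nat.choose_succ_succ (n + 1) j
        rw [this]; push_cast; ring
      rw [Finset.sum_congr rfl hsplit, Finset.sum_add_distrib]
      have h1 : ∑ j ∈ Finset.Icc m (n + 1),
          (-1 : ℝ) ^ (j - m) * (((n + 1).choose j : ℝ) * (j.choose m : ℝ)) = 0 :=
        lemA hlt
      have h2 : ∑ j ∈ Finset.Icc m (n + 1),
          (-1 : ℝ) ^ (j - m) * (((n + 1).choose (j + 1) : ℝ) * (j.choose m : ℝ)) = 1 := by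
        rw [Finset.sum_Icc_succ_top (by omega)]
        have htop : ((n + 1).choose (n + 2) : ℝ) = 0 := by
          norm_cast
          exact Nat.choose_eq_zero_of_lt (by omega)
        rw [htop, ih m hmn]
        ring
      rw [h1, h2]; ring
    · have : m = n + 1 := by omega
      subst this
      simp

theorem stmt_12 (n k : ℕ) (hn : 1 ≤ n) (hk : 1 ≤ k) :
    H k n = ∑ j ∈ Finset.Icc 1 n,
      (Nat.choose (n + 1) (j + 1) : ℝ) * S k j * (Nat.factorial j : ℝ) := by
  unfold H S
  have hfac : ∀ j : ℕ, (Nat.factorial j : ℝ) ≠ 0 := fun j => by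
    exact_mod_cast j.factorial_ne_zero
  have step1 : ∀ j ∈ Finset.Icc 1 n,
      (Nat.choose (n + 1) (j + 1) : ℝ) *
        ((1 / (Nat.factorial j : ℝ)) *
          ∑ m ∈ Finset.Icc 1 j, (Nat.choose j m : ℝ) * (-1 : ℝ) ^ (j - m) / (m : ℝ) ^ k) *
        (Nat.factorial j : ℝ) =
      ∑ m ∈ Finset.Icc 1 j,
        (Nat.choose (n + 1) (j + 1) : ℝ) * ((Nat.choose j m : ℝ) * (-1 : ℝ) ^ (j - m) / (m : ℝ) ^ k) := by
    intro j _
    simp only [Finset.mul_sum, Finset.sum_mul]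
    refine Finset.sum_congr rfl fun m hm => ?_
    rw [Finset.mem_Icc] at hm
    have hm' : (m : ℝ) ≠ 0 := by
      have : m ≠ 0 := by omega
      exact_mod_cast this
    have hm0 : (m : ℝ) ^ k ≠ 0 := pow_ne_zero _ hm' 
    field_simp
  rw [Finset.sum_congr rfl step1]
  rw [Finset.sum_comm' (s := Finset.Icc 1 n) (t := fun j => Finset.Icc 1 j)
    (t' := Finset.Icc 1 n) (s' := fun m => Finset.Icc m n)
    (by intro j m; simp only [Finset.mem_Icc]; omega)]
  refine Finset.sum_congr rfl fun m hm => ?_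
  rw [Finset.mem_Icc] at hm
  have key := lemB n m hm.2
  have : ∑ j ∈ Finset.Icc m n,
      (Nat.choose (n + 1) (j + 1) : ℝ) * ((Nat.choose j m : ℝ) * (-1 : ℝ) ^ (j - m) / (m : ℝ) ^ k)
      = (1 / (m : ℝ) ^ k) *
        ∑ j ∈ Finset.Icc m n,
          (-1 : ℝ) ^ (j - m) * (((n + 1).choose (j + 1) : ℝ) * (j.choose m : ℝ)) := by
    rw [Finset.mul_sum]
    exact Finset.sum_congr rfl fun j _ => by ring
  rw [this, key]
  ring
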